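/- (Monotonicity for sum-rank metric codes.) Let C be an [n,k;n_1,…,n_ℓ] sum-rank metric code over (F;K_1,…,K_ℓ) with k > 0, and let d_i = d_{SR,i}(C) for i = 1,…,k. Then 1 ≤ d_1 < d_2 < ⋯ < d_k ≤ n. -/

import Mathlib

open Module

/-! Setup for sum-rank metric codes and sum-matroids.

We fix `ℓ` finite fields `K i` with a common extension `F` (given by algebra
structures), and block lengths `nv i`.  The ambient space `F^n` (with
`n = ∑ i, nv i`) is modelled as the dependent product of the blocks `F^{nv i}`,
and an element of the product lattice `P(K^n)` is a tuple of `K i`-subspaces of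
`K i ^ (nv i)`. -/

/-- The ambient space `F^n`, split into `ℓ` blocks of sizes `nv i`. -/
abbrev SRAmb (ℓ : ℕ) (nv : Fin ℓ → ℕ) (F : Type) : Type :=
  (i : Fin ℓ) → Fin (nv i) → F

/-- The product lattice `P(K^n)`: tuples `L` where `L i` is a `K i`-subspace of
`K i ^ (nv i)`. -/
abbrev SRLat (ℓ : ℕ) (nv : Fin ℓ → ℕ) (K : Fin ℓ → Type) [∀ i, Field (K i)] : Type :=
  (i : Fin ℓ) → Submodule (K i) (Fin (nv i) → K i)

variable {ℓ : ℕ} {nv : Fin ℓ → ℕ} {F : Type} [Field F]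
  {K : Fin ℓ → Type} [∀ i, Field (K i)] [∀ i, Algebra (K i) F]

/-- `Rk(L) = ∑ i, dim_{K i} (L i)`. -/
noncomputable def SRrk (L : SRLat ℓ nv K) : ℕ := ∑ i, finrank (K i) (L i)

/-- Orthogonal complement of a subspace of `k^m` with respect to the standard
dot product. -/
def SRorth {k : Type} [Field k] {m : ℕ} (W : Submodule k (Fin m → k)) :
    Submodule k (Fin m → k) where
  carrier := {v | ∀ w ∈ W, ∑ t, v t * w t = 0}
  zero_mem' := by intro w hw; simp
  add_mem' := by
    intro a b ha hb w hw
    have h : ∑ t, (a + b) t * w t = (∑ t, a t * w t) + ∑ t, b t * w t := by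
      simp [add_mul, Finset.sum_add_distrib]
    rw [h, ha w hw, hb w hw, add_zero]
  smul_mem' := by
    intro c a ha w hw
    have h : ∑ t, (c • a) t * w t = c * ∑ t, a t * w t := by
      simp [Finset.mul_sum, mul_assoc]
    rw [h, ha w hw, mul_zero]

/-- Componentwise orthogonal complement `L^⊥` in the lattice `P(K^n)`. -/
def SRlatPerp (L : SRLat ℓ nv K) : SRLat ℓ nv K := fun i => SRorth (L i)

/-- The `i`-th component of the sum-rank support of `c ∈ F^n`: the `K i`-row
space of the coordinate matrix of the `i`-th block of `c` (described
basis-freely as the span of the images of the block of `c` under all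
`K i`-linear functionals `F → K i`). -/
def SRsupp (c : SRAmb ℓ nv F) (i : Fin ℓ) : Submodule (K i) (Fin (nv i) → K i) :=
  Submodule.span (K i) {v | ∃ f : F →ₗ[K i] K i, v = fun t => f (c i t)}

/-- The sum-rank weight `srank(c) = Rk(supp(c))`. -/
noncomputable def SRwt (c : SRAmb ℓ nv F) : ℕ :=
  ∑ i, finrank (K i) (SRsupp (K := K) c i)

/-- The sum-rank support space `V_L = {c ∈ F^n : supp(c) ⊆ L}`. -/
def SRVL (L : SRLat ℓ nv K) : Submodule F (SRAmb ℓ nv F) where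
  carrier := {c | ∀ i, SRsupp (K := K) c i ≤ L i}
  zero_mem' := by
    intro i
    apply Submodule.span_le.mpr
    rintro v ⟨f, rfl⟩
    have h : (fun t => f ((0 : SRAmb ℓ nv F) i t)) = (0 : Fin (nv i) → K i) := by
      funext t; simp
    rw [h]
    exact (L i).zero_mem
  add_mem' := by
    intro a b ha hb i
    apply Submodule.span_le.mpr
    rintro v ⟨f, rfl⟩
    have h : (fun t => f ((a + b) i t)) =
        (fun t => f (a i t)) + fun t => f (b i t) := by
      funext t; simp
    rw [h]
    exact (L i).add_mem (ha i (Submodule.subset_span ⟨f, rfl⟩))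
      (hb i (Submodule.subset_span ⟨f, rfl⟩))
  smul_mem' := by
    intro x a ha i
    apply Submodule.span_le.mpr
    rintro v ⟨f, rfl⟩
    have h : (fun t => f ((x • a) i t)) =
        fun t => (f.comp (LinearMap.mulLeft (K i) x)) (a i t) := by
      funext t; simp [smul_eq_mul]
    rw [h]
    exact ha i (Submodule.subset_span ⟨_, rfl⟩)

/-- The dual code `C^⊥` with respect to the standard bilinear form on `F^n`. -/
def SRdual (C : Submodule F (SRAmb ℓ nv F)) : Submodule F (SRAmb ℓ nv F) where
  carrier := {x | ∀ c ∈ C, ∑ i, ∑ t, x i t * c i t = 0}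
  zero_mem' := by intro c hc; simp
  add_mem' := by
    intro a b ha hb c hc
    have h : ∑ i, ∑ t, (a + b) i t * c i t =
        (∑ i, ∑ t, a i t * c i t) + ∑ i, ∑ t, b i t * c i t := by
      simp [add_mul, Finset.sum_add_distrib]
    rw [h, ha c hc, hb c hc, add_zero]
  smul_mem' := by
    intro x a ha c hc
    have h : ∑ i, ∑ t, (x • a) i t * c i t = x * ∑ i, ∑ t, a i t * c i t := by
      simp [Finset.mul_sum, mul_assoc]
    rw [h, ha c hc, mul_zero]

/-- `C(L) = {c ∈ C^⊥ : supp(c) ⊆ L^⊥} = C^⊥ ∩ V_{L^⊥}`. -/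
def SRCL (C : Submodule F (SRAmb ℓ nv F)) (L : SRLat ℓ nv K) :
    Submodule F (SRAmb ℓ nv F) :=
  SRdual C ⊓ SRVL (SRlatPerp L)

/-- The projection `Π_L : F^n → F^{Rk L}`, `x ↦ x Aᵀ`, where
`A = diag(A_1, …, A_ℓ)` and `A_i` is the matrix whose rows are the chosen basis
of `L i` over `K i`.  The target `F^{Rk L}` is indexed blockwise. -/
noncomputable def SRpi (L : SRLat ℓ nv K) :
    SRAmb ℓ nv F →ₗ[F] ((i : Fin ℓ) → Fin (finrank (K i) (L i)) → F) where
  toFun x := fun i j =>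
    ∑ t, x i t * algebraMap (K i) F ((Module.finBasis (K i) (L i) j).val t)
  map_add' x y := by
    funext i j
    simp [add_mul, Finset.sum_add_distrib]
  map_smul' a x := by
    funext i j
    simp [Finset.mul_sum, mul_assoc]

/-- The rank function `ρ_C(L) = dim_F Π_L(C^⊥)` of the sum-matroid associated
to the code `C`. -/
noncomputable def SRrho (C : Submodule F (SRAmb ℓ nv F)) (L : SRLat ℓ nv K) : ℕ :=
  finrank F (Submodule.map (SRpi (F := F) L) (SRdual C))

/-- Minimum sum-rank distance of a code. -/
noncomputable def SRminDist (K : Fin ℓ → Type) [∀ i, Field (K i)]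
    [∀ i, Algebra (K i) F] (C : Submodule F (SRAmb ℓ nv F)) : ℕ :=
  sInf {w | ∃ c ∈ C, c ≠ 0 ∧ SRwt (K := K) c = w}

/-- The `r`-th generalized sum-rank weight
`d_{SR,r}(C) = min{Rk L : dim_F (C ∩ V_L) ≥ r}`. -/
noncomputable def SRdgw (K : Fin ℓ → Type) [∀ i, Field (K i)]
    [∀ i, Algebra (K i) F] (C : Submodule F (SRAmb ℓ nv F)) (r : ℕ) : ℕ :=
  sInf {w | ∃ L : SRLat ℓ nv K, r ≤ finrank F ↥(C ⊓ SRVL L) ∧ SRrk L = w}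

/-- The sum-matroid axioms (R1), (R2), (R3) for a function `ρ : P(K^n) → ℕ`. -/
def IsSumMatroid (ρ : SRLat ℓ nv K → ℕ) : Prop :=
  (∀ L, ρ L ≤ SRrk L) ∧
  (∀ L L' : SRLat ℓ nv K, L ≤ L' → ρ L ≤ ρ L') ∧
  (∀ L L' : SRLat ℓ nv K, ρ (L ⊔ L') + ρ (L ⊓ L') ≤ ρ L + ρ L')

/-- The dual rank function `ρ*(L) = ρ(L^⊥) + Rk L − ρ(K^n)`. -/
noncomputable def SRdualRk (ρ : SRLat ℓ nv K → ℕ) (L : SRLat ℓ nv K) : ℕ :=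
  ρ (SRlatPerp L) + SRrk L - ρ ⊤

/-- The nullity function `η(L) = Rk L − ρ(L)`. -/
noncomputable def SReta (ρ : SRLat ℓ nv K → ℕ) (L : SRLat ℓ nv K) : ℕ :=
  SRrk L - ρ L

/-- The `i`-th generalized weight of a sum-matroid,
`d_i(M) = min{Rk L : η(L) = i}`. -/
noncomputable def SRgw (ρ : SRLat ℓ nv K → ℕ) (i : ℕ) : ℕ :=
  sInf {w | ∃ L : SRLat ℓ nv K, SReta ρ L = i ∧ SRrk L = w}


section Aux

variable {ℓ : ℕ} {nv : Fin ℓ → ℕ} {F : Type} [Field F]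
  {K : Fin ℓ → Type} [∀ i, Field (K i)] [∀ i, Algebra (K i) F]

lemma SRVL_top : SRVL (F := F) (⊤ : SRLat ℓ nv K) = ⊤ := by
  rw [eq_top_iff]
  intro c _ i
  exact le_top

lemma SRrk_top : SRrk (⊤ : SRLat ℓ nv K) = ∑ i, nv i := by
  unfold SRrk
  refine Finset.sum_congr rfl fun i _ => ?_
  have h : (⊤ : SRLat ℓ nv K) i = ⊤ := rfl
  rw [h, finrank_top, Module.finrank_fin_fun]

lemma SRVL_eq_bot [∀ i, FiniteDimensional (K i) F] (L : SRLat ℓ nv K)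
    (h : SRrk L = 0) : SRVL (F := F) L = ⊥ := by
  have hL : ∀ i, L i = ⊥ := by
    intro i
    have h0 : finrank (K i) (L i) = 0 := by
      have := (Finset.sum_eq_zero_iff.mp h) i (Finset.mem_univ i)
      exact this
    exact Submodule.finrank_eq_zero.mp h0
  rw [eq_bot_iff]
  intro c hc
  have hc0 : c = 0 := by
    funext i t
    show c i t = (0 : F)
    rw [← (Module.forall_dual_apply_eq_zero_iff (K i) (c i t))]
    intro f
    have hmem : (fun s => f (c i s)) ∈ SRsupp (K := K) c i :=
      Submodule.subset_span ⟨f, rfl⟩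
    have := hc i hmem
    rw [hL i, Submodule.mem_bot] at this
    exact congrFun this t
  simp [hc0]

/-- Rank-nullity bound: cutting with the kernel of a functional loses
at most one dimension. -/
lemma finrank_inf_ker_le {k M : Type} [Field k] [AddCommGroup M] [Module k M]
    [FiniteDimensional k M] (X : Submodule k M) (ψ : M →ₗ[k] k) :
    finrank k X ≤ finrank k ↥(X ⊓ LinearMap.ker ψ) + 1 := by
  have h1 := Submodule.finrank_sup_add_finrank_inf_eq X (LinearMap.ker ψ)
  have h2 : finrank k ↥(X ⊔ LinearMap.ker ψ) ≤ finrank k M :=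
    Submodule.finrank_le _
  have h3 := LinearMap.finrank_range_add_finrank_ker ψ
  have h4 : finrank k ↥(LinearMap.range ψ) ≤ 1 := by
    have := Submodule.finrank_le (LinearMap.range ψ)
    simpa [finrank_self] using this
  omega

/-- A functional not vanishing on `X` cuts a hyperplane out of `X`. -/
lemma finrank_inf_ker_hyperplane {k M : Type} [Field k] [AddCommGroup M]
    [Module k M] [FiniteDimensional k M] (X : Submodule k M) (ψ : M →ₗ[k] k)
    {v : M} (hv : v ∈ X) (hψv : ψ v ≠ 0) :
    finrank k ↥(X ⊓ LinearMap.ker ψ) + 1 = finrank k X := by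
  have h1 := Submodule.finrank_sup_add_finrank_inf_eq X (LinearMap.ker ψ)
  have h2 : X ⊔ LinearMap.ker ψ = ⊤ := by
    rw [eq_top_iff]
    intro m _
    have hker : m - (ψ m / ψ v) • v ∈ LinearMap.ker ψ := by
      rw [LinearMap.mem_ker, map_sub, map_smul, smul_eq_mul,
        div_mul_cancel₀ _ hψv, sub_self]
    have : m = (ψ m / ψ v) • v + (m - (ψ m / ψ v) • v) := by ring_nf; abel
    rw [this]
    exact Submodule.add_mem_sup (X.smul_mem _ hv) hker
  have h3 := LinearMap.finrank_range_add_finrank_ker ψ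
  have h5 : finrank k ↥(LinearMap.range ψ) = 1 := by
    have hle : finrank k ↥(LinearMap.range ψ) ≤ 1 := by
      have := Submodule.finrank_le (LinearMap.range ψ)
      simpa [finrank_self] using this
    have hne : finrank k ↥(LinearMap.range ψ) ≠ 0 := by
      rw [ne_eq, Submodule.finrank_eq_zero]
      intro hbot
      have : ψ v ∈ LinearMap.range ψ := ⟨v, rfl⟩
      rw [hbot, Submodule.mem_bot] at this
      exact hψv this
    omega
  rw [h2, finrank_top] at h1
  omega

/-- Key step: from `L` of positive rank produce `L' ≤ L` of rank one less,
losing at most one dimension of `C ∩ V_L`. -/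
lemma SR_step [∀ i, FiniteDimensional (K i) F] [FiniteDimensional F F]
    (C : Submodule F (SRAmb ℓ nv F)) (L : SRLat ℓ nv K) (hL : SRrk L ≠ 0) :
    ∃ L' : SRLat ℓ nv K, SRrk L' + 1 = SRrk L ∧
      finrank F ↥(C ⊓ SRVL L) ≤ finrank F ↥(C ⊓ SRVL L') + 1 := by
  obtain ⟨i0, -, hi0⟩ := Finset.exists_ne_zero_of_sum_ne_zero (by exact hL :
    ∑ i, finrank (K i) (L i) ≠ 0)
  have hbot : L i0 ≠ ⊥ := by
    intro h
    rw [h, finrank_bot] at hi0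
    exact hi0 rfl
  obtain ⟨v, hvL, hv0⟩ := Submodule.ne_bot_iff _ |>.mp hbot
  obtain ⟨t0, ht0⟩ := Function.ne_iff.mp hv0
  simp only [Pi.zero_apply] at ht0
  set g : (Fin (nv i0) → K i0) →ₗ[K i0] K i0 := LinearMap.proj t0 with hg
  set W := L i0 ⊓ LinearMap.ker g with hW
  refine ⟨Function.update L i0 W, ?_, ?_⟩
  · -- rank computation
    have hWrk : finrank (K i0) W + 1 = finrank (K i0) (L i0) :=
      finrank_inf_ker_hyperplane (L i0) g hvL ht0
    have he : ∀ j ∈ Finset.univ.erase i0,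
        finrank (K j) ((Function.update L i0 W) j) = finrank (K j) (L j) := by
      intro j hj
      rw [Function.update_of_ne (Finset.mem_erase.mp hj).1]
    unfold SRrk
    rw [← Finset.add_sum_erase _ _ (Finset.mem_univ i0),
      ← Finset.add_sum_erase _ (fun j => finrank (K j) (L j)) (Finset.mem_univ i0),
      Finset.sum_congr rfl he, Function.update_self]
    omega
  · -- dimension bound
    set ψ : SRAmb ℓ nv F →ₗ[F] F :=
      (LinearMap.proj t0).comp (LinearMap.proj (R := F)
        (φ := fun i => Fin (nv i) → F) i0) with hψ
    have hsub : (C ⊓ SRVL L) ⊓ LinearMap.ker ψ ≤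
        C ⊓ SRVL (Function.update L i0 W) := by
      rintro c ⟨⟨hcC, hcL⟩, hck⟩
      refine ⟨hcC, fun j => ?_⟩
      rcases eq_or_ne j i0 with rfl | hj
      · rw [Function.update_self]
        refine le_inf (hcL j) ?_
        rw [SRsupp, Submodule.span_le]
        rintro w ⟨f, rfl⟩
        have hc0 : c j t0 = 0 := hck
        rw [SetLike.mem_coe, LinearMap.mem_ker]
        show (fun s => f (c j s)) t0 = 0
        simp [hc0]
      · rw [Function.update_of_ne hj]
        exact hcL j
    calc finrank F ↥(C ⊓ SRVL L)
        ≤ finrank F ↥((C ⊓ SRVL L) ⊓ LinearMap.ker ψ) + 1 :=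
          finrank_inf_ker_le _ ψ
      _ ≤ finrank F ↥(C ⊓ SRVL (Function.update L i0 W)) + 1 := by
          exact Nat.add_le_add_right (Submodule.finrank_mono hsub) 1

end Aux

/-- Monotonicity for sum-rank metric codes: For an `[n,k]`
sum-rank metric code `C` with `k > 0`, the generalized sum-rank weights
satisfy `1 ≤ d_1 < d_2 < ⋯ < d_k ≤ n`. -/
theorem stmt18_monotonicity_code
    {ℓ : ℕ} (hℓ : 0 < ℓ) {nv : Fin ℓ → ℕ} (hnv : ∀ i, 0 < nv i)
    {F : Type} [Field F] [Finite F]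
    {K : Fin ℓ → Type} [∀ i, Field (K i)] [∀ i, Finite (K i)]
    [∀ i, Algebra (K i) F] [∀ i, FiniteDimensional (K i) F]
    (C : Submodule F (SRAmb ℓ nv F)) (k : ℕ) (hk : Module.finrank F C = k)
    (hk0 : 0 < k) :
    1 ≤ SRdgw K C 1 ∧
    (∀ i : ℕ, 1 ≤ i → i < k → SRdgw K C i < SRdgw K C (i + 1)) ∧
    SRdgw K C k ≤ ∑ i, nv i := by
  have htopmem : ∀ r : ℕ, r ≤ k →
      (∑ i, nv i) ∈ {w | ∃ L : SRLat ℓ nv K,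
        r ≤ finrank F ↥(C ⊓ SRVL L) ∧ SRrk L = w} := by
    intro r hr
    refine ⟨⊤, ?_, SRrk_top⟩
    rw [SRVL_top, inf_top_eq, hk]
    exact hr
  have hpos : ∀ r : ℕ, 1 ≤ r → ∀ w ∈ {w | ∃ L : SRLat ℓ nv K,
      r ≤ finrank F ↥(C ⊓ SRVL L) ∧ SRrk L = w}, w ≠ 0 := by
    rintro r hr w ⟨L, hfin, rfl⟩ hw0
    rw [SRVL_eq_bot L hw0, inf_bot_eq, finrank_bot] at hfin
    omega
  refine ⟨?_, ?_, ?_⟩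
  · -- 1 ≤ d_1
    rw [SRdgw, Nat.one_le_iff_ne_zero]
    intro h0
    have hne : {w | ∃ L : SRLat ℓ nv K,
        1 ≤ finrank F ↥(C ⊓ SRVL L) ∧ SRrk L = w}.Nonempty :=
      ⟨_, htopmem 1 hk0⟩
    have := Nat.sInf_mem hne
    rw [h0] at this
    exact hpos 1 le_rfl 0 this rfl
  · -- strict monotonicity
    intro i hi1 hik
    have hne : {w | ∃ L : SRLat ℓ nv K,
        i + 1 ≤ finrank F ↥(C ⊓ SRVL L) ∧ SRrk L = w}.Nonempty :=
      ⟨_, htopmem (i + 1) (by omega)⟩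
    have hmem := Nat.sInf_mem hne
    obtain ⟨L, hfin, hrk⟩ := hmem
    have hLne : SRrk L ≠ 0 := by
      intro h0
      exact hpos (i + 1) (by omega) (SRrk L) ⟨L, hfin, rfl⟩ h0
    obtain ⟨L', hrk', hle⟩ := SR_step C L hLne
    have hmem' : SRrk L' ∈ {w | ∃ L : SRLat ℓ nv K,
        i ≤ finrank F ↥(C ⊓ SRVL L) ∧ SRrk L = w} := ⟨L', by omega, rfl⟩
    have h1 : SRdgw K C i ≤ SRrk L' := Nat.sInf_le hmem'
    have h2 : SRdgw K C (i + 1) = SRrk L := hrk.symm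
    rw [SRdgw] at h1 ⊢
    omega
  · -- d_k ≤ n
    exact Nat.sInf_le (htopmem k le_rfl)
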